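/- Let a : ℝ → ℝ be continuous, 1-periodic, and strictly positive. Then the coefficient C₉ = ⟨a·[[a⁻¹·[[a]]]]⟩ satisfies C₉ = −⟨a⁻¹·[[a]]²⟩ ≤ 0; moreover, if a is not constant then C₉ < 0. -/

import Mathlib

open MeasureTheory Matrix

/-- The mean of a function over one period: `⟨b⟩ = ∫₀¹ b(y) dy`. -/
noncomputable def pmean (b : ℝ → ℝ) : ℝ := ∫ y in (0:ℝ)..1, b y

/-- The fluctuating (mean-zero) part: `{b} = b − ⟨b⟩`. -/
noncomputable def pfluct (b : ℝ → ℝ) : ℝ → ℝ := fun y => b y - pmean b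

/-- The mean-zero primitive of the fluctuating part:
`[[b]](y) = ∫₀^y {b}(ξ) dξ − ∫₀¹ (∫₀^s {b}(ξ) dξ) ds`. -/
noncomputable def pbracket (b : ℝ → ℝ) : ℝ → ℝ :=
  fun y => (∫ ξ in (0:ℝ)..y, pfluct b ξ) - ∫ s in (0:ℝ)..1, (∫ ξ in (0:ℝ)..s, pfluct b ξ)

lemma pfluct_cont {b : ℝ → ℝ} (hb : Continuous b) : Continuous (pfluct b) :=
  hb.sub continuous_const

lemma pbracket_hasDerivAt {b : ℝ → ℝ} (hb : Continuous b) (y : ℝ) :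
    HasDerivAt (pbracket b) (pfluct b y) y :=
  (((pfluct_cont hb).integral_hasStrictDerivAt 0 y).hasDerivAt).sub_const _

lemma pbracket_cont {b : ℝ → ℝ} (hb : Continuous b) : Continuous (pbracket b) :=
  continuous_iff_continuousAt.2 fun y => (pbracket_hasDerivAt hb y).continuousAt

lemma integral_pfluct {b : ℝ → ℝ} (hb : Continuous b) :
    ∫ y in (0:ℝ)..1, pfluct b y = 0 := by
  unfold pfluct
  rw [intervalIntegral.integral_sub (hb.intervalIntegrable _ _) intervalIntegrable_const]
  simp [pmean]

lemma pbracket_boundary {b : ℝ → ℝ} (hb : Continuous b) :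
    pbracket b 1 = pbracket b 0 := by
  unfold pbracket
  rw [integral_pfluct hb]
  simp

lemma integral_pbracket {b : ℝ → ℝ} (hb : Continuous b) :
    ∫ y in (0:ℝ)..1, pbracket b y = 0 := by
  have hH : Continuous fun s => ∫ ξ in (0:ℝ)..s, pfluct b ξ :=
    continuous_iff_continuousAt.2 fun y =>
      (((pfluct_cont hb).integral_hasStrictDerivAt 0 y).hasDerivAt).continuousAt
  unfold pbracket
  rw [intervalIntegral.integral_sub (hH.intervalIntegrable _ _) intervalIntegrable_const]
  simp

/-- For `a` continuous, 1-periodic and strictly positive, the coefficient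
`C₉ = ⟨a·[[a⁻¹·[[a]]]]⟩` satisfies `C₉ = −⟨a⁻¹·[[a]]²⟩ ≤ 0`, with strict inequality
if `a` is not constant. -/
theorem statement11 (a : ℝ → ℝ) (ha : Continuous a) (hper : Function.Periodic a 1)
    (hpos : ∀ y, 0 < a y)
    (C₉ : ℝ)
    (hC9 : C₉ = pmean (fun y => a y * pbracket (fun z => (a z)⁻¹ * pbracket a z) y)) :
    C₉ = - pmean (fun y => (a y)⁻¹ * (pbracket a y)^2) ∧
    C₉ ≤ 0 ∧
    ((∃ x y, a x ≠ a y) → C₉ < 0) := by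
  have hainv : Continuous fun z => (a z)⁻¹ := ha.inv₀ fun z => (hpos z).ne'
  set F := pbracket a with hFdef
  have hFc : Continuous F := pbracket_cont ha
  set bb : ℝ → ℝ := fun z => (a z)⁻¹ * F z with hbbdef
  have hbbc : Continuous bb := hainv.mul hFc
  set G := pbracket bb with hGdef
  have hGc : Continuous G := pbracket_cont hbbc
  have hfa : Continuous (pfluct a) := pfluct_cont ha
  have hfbb : Continuous (pfluct bb) := pfluct_cont hbbc
  have hGint : ∫ y in (0:ℝ)..1, G y = 0 := integral_pbracket hbbc
  have hFint : ∫ y in (0:ℝ)..1, F y = 0 := integral_pbracket ha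
  have hbF : F 1 = F 0 := pbracket_boundary ha
  have hbG : G 1 = G 0 := pbracket_boundary hbbc
  -- Step 1: ∫ a·G = ∫ {a}·G
  have step1 : ∫ y in (0:ℝ)..1, a y * G y = ∫ y in (0:ℝ)..1, pfluct a y * G y := by
    have : ∀ y, a y * G y = pfluct a y * G y + pmean a * G y := by
      intro y; unfold pfluct; ring
    simp_rw [this]
    rw [intervalIntegral.integral_add (f := fun y => pfluct a y * G y) (g := fun y => pmean a * G y) ((hfa.mul hGc).intervalIntegrable _ _)
      ((continuous_const.mul hGc).intervalIntegrable _ _),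
      intervalIntegral.integral_const_mul, hGint, mul_zero, add_zero]
  -- Step 2: integration by parts: ∫ F·{bb} = F 1 G 1 - F 0 G 0 - ∫ {a}·G
  have ibp : ∫ y in (0:ℝ)..1, F y * pfluct bb y
      = F 1 * G 1 - F 0 * G 0 - ∫ y in (0:ℝ)..1, pfluct a y * G y := by
    exact intervalIntegral.integral_mul_deriv_eq_deriv_mul
      (fun x _ => pbracket_hasDerivAt ha x)
      (fun x _ => pbracket_hasDerivAt hbbc x)
      (hfa.intervalIntegrable _ _) (hfbb.intervalIntegrable _ _)
  have hbd : F 1 * G 1 - F 0 * G 0 = 0 := by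
    rw [hbF, hbG]; ring
  -- Step 3: ∫ F·{bb} = ∫ a⁻¹ F²
  have step3 : ∫ y in (0:ℝ)..1, F y * pfluct bb y
      = ∫ y in (0:ℝ)..1, (a y)⁻¹ * (F y)^2 := by
    have : ∀ y, F y * pfluct bb y = (a y)⁻¹ * (F y)^2 - pmean bb * F y := by
      intro y; unfold pfluct; simp only [hbbdef]; ring
    simp_rw [this]
    rw [intervalIntegral.integral_sub (f := fun y => (a y)⁻¹ * F y ^ 2) (g := fun y => pmean bb * F y) ((hainv.mul (hFc.pow 2)).intervalIntegrable _ _)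
      ((continuous_const.mul hFc).intervalIntegrable _ _),
      intervalIntegral.integral_const_mul, hFint, mul_zero, sub_zero]
  have key : C₉ = - ∫ y in (0:ℝ)..1, (a y)⁻¹ * (F y)^2 := by
    rw [hC9]
    show (∫ y in (0:ℝ)..1, a y * G y) = _
    rw [step1, ← step3]
    have := ibp
    rw [hbd] at this
    linarith [this]
  refine ⟨key, ?_, ?_⟩
  · rw [key, neg_nonpos]
    exact intervalIntegral.integral_nonneg zero_le_one fun u _ =>
      mul_nonneg (inv_nonneg.2 (hpos u).le) (sq_nonneg _)
  · rintro ⟨x, y, hxy⟩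
    rw [key, neg_lt, neg_zero]
    -- find z ∈ Ioo 0 1 with F z ≠ 0
    have hFz : ∃ z ∈ Set.Ioo (0:ℝ) 1, F z ≠ 0 := by
      by_contra h
      push_neg at h
      -- then F = 0 on Ioo, so pfluct a = 0 on Ioo, so a = pmean a on Icc, so a const
      have hfa0 : ∀ z ∈ Set.Ioo (0:ℝ) 1, a z = pmean a := by
        intro z hz
        have h1 : HasDerivAt F (pfluct a z) z := pbracket_hasDerivAt ha z
        have h2 : HasDerivAt F 0 z := by
          have : F =ᶠ[nhds z] fun _ => (0:ℝ) := by
            filter_upwards [Ioo_mem_nhds hz.1 hz.2] with w hw using h w hw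
          exact (hasDerivAt_const z (0:ℝ)).congr_of_eventuallyEq this
        have := h1.unique h2
        unfold pfluct at this
        linarith [this]
      have hIcc : ∀ z ∈ Set.Icc (0:ℝ) 1, a z = pmean a := by
        have : Set.EqOn a (fun _ => pmean a) (closure (Set.Ioo (0:ℝ) 1)) :=
          Set.EqOn.closure (fun z hz => hfa0 z hz) ha continuous_const
        intro z hz
        rw [← closure_Ioo (zero_ne_one' ℝ)] at hz
        exact this hz
      have hall : ∀ z : ℝ, a z = pmean a := by
        intro z
        have h1 : a (z - (⌊z⌋ : ℝ) * 1) = a z := hper.sub_int_mul_eq ⌊z⌋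
        rw [← h1]
        apply hIcc
        constructor
        · simp only [mul_one]; linarith [Int.floor_le z]
        · simp only [mul_one]; linarith [Int.lt_floor_add_one z]
      exact hxy (by rw [hall x, hall y])
    obtain ⟨z, hz, hFzne⟩ := hFz
    have hg : Continuous fun y => (a y)⁻¹ * (F y)^2 := hainv.mul (hFc.pow 2)
    rw [intervalIntegral.integral_pos_iff_support_of_nonneg_ae
      (Filter.Eventually.of_forall fun u => mul_nonneg (inv_nonneg.2 (hpos u).le) (sq_nonneg _))
      (hg.intervalIntegrable _ _)]
    refine ⟨zero_lt_one, ?_⟩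
    have hopen : IsOpen (Function.support (fun y => (a y)⁻¹ * (F y)^2) ∩ Set.Ioo 0 1) :=
      hg.isOpen_support.inter isOpen_Ioo
    have hne : (Function.support (fun y => (a y)⁻¹ * (F y)^2) ∩ Set.Ioo 0 1).Nonempty := by
      refine ⟨z, ?_, hz⟩
      simp only [Function.mem_support]
      exact mul_ne_zero (inv_ne_zero (hpos z).ne') (pow_ne_zero 2 hFzne)
    calc (0:ENNReal) < volume (Function.support (fun y => (a y)⁻¹ * (F y)^2) ∩ Set.Ioo 0 1) :=
          hopen.measure_pos volume hne
      _ ≤ _ := measure_mono (Set.inter_subset_inter_right _ Set.Ioo_subset_Ioc_self)
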